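/- Let x : [0, ε) → ℝⁿ be a real analytic path and let h be a real analytic function germ at x(0) with h(x(0)) = 0 and ∂h/∂xᵢ(x(0)) = 0 for all i = 1, …, n. Then the order of vanishing in s of the function s ↦ h(x(s)) at s = 0 is strictly greater than the minimum over i of the orders of vanishing of s ↦ (∂h/∂xᵢ)(x(s)) at s = 0. -/

import Mathlib

open Filter Metric Set Topology

lemma myIteratedDerivWithin_of_isOpen {F : Type*} [NormedAddCommGroup F] [NormedSpace ℝ F]
    {f : ℝ → F} {s : Set ℝ} {x : ℝ} (n : ℕ) (hs : IsOpen s) (hx : x ∈ s) :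
    iteratedDerivWithin n f s x = iteratedDeriv n f x := by
  simp only [iteratedDerivWithin, iteratedDeriv, iteratedFDerivWithin_of_isOpen n hs hx]

lemma myAnalyticAt_deriv {F : Type*} [NormedAddCommGroup F] [NormedSpace ℝ F] [CompleteSpace F]
    {f : ℝ → F} {x : ℝ} (hf : AnalyticAt ℝ f x) : AnalyticAt ℝ (deriv f) x := by
  obtain ⟨s, hs, h⟩ := hf.exists_mem_nhds_analyticOnNhd
  exact h.deriv x (mem_of_mem_nhds hs)

lemma myIteratedDeriv_add {f g : ℝ → ℝ} {x : ℝ} (hf : AnalyticAt ℝ f x)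
    (hg : AnalyticAt ℝ g x) (n : ℕ) :
    iteratedDeriv n (fun s => f s + g s) x = iteratedDeriv n f x + iteratedDeriv n g x := by
  obtain ⟨s, hs, hfs⟩ := hf.exists_mem_nhds_analyticOnNhd
  obtain ⟨t, ht, hgt⟩ := hg.exists_mem_nhds_analyticOnNhd
  set u := interior (s ∩ t) with hu_def
  have hu : IsOpen u := isOpen_interior
  have hxu : x ∈ u := mem_interior_iff_mem_nhds.2 (inter_mem hs ht)
  have hfu : ContDiffOn ℝ n f u :=
    (hfs.mono (interior_subset.trans inter_subset_left)).contDiffOn hu.uniqueDiffOn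
  have hgu : ContDiffOn ℝ n g u :=
    (hgt.mono (interior_subset.trans inter_subset_right)).contDiffOn hu.uniqueDiffOn
  rw [← myIteratedDerivWithin_of_isOpen n hu hxu,
    ← myIteratedDerivWithin_of_isOpen (f := f) n hu hxu,
    ← myIteratedDerivWithin_of_isOpen (f := g) n hu hxu]
  exact iteratedDerivWithin_add hxu hu.uniqueDiffOn (hfu x hxu) (hgu x hxu)

lemma myIteratedDeriv_sum {ι : Type*} (t : Finset ι) {F : ι → ℝ → ℝ} {x : ℝ}
    (hF : ∀ i ∈ t, AnalyticAt ℝ (F i) x) (n : ℕ) :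
    iteratedDeriv n (fun s => ∑ i ∈ t, F i s) x = ∑ i ∈ t, iteratedDeriv n (F i) x := by
  induction t using Finset.cons_induction with
  | empty =>
    simp only [Finset.sum_empty, iteratedDeriv_eq_iterate]
    rw [Function.iterate_fixed (deriv_const' (0:ℝ)) n]
  | cons a t ha ih =>
    simp only [Finset.sum_cons]
    rw [myIteratedDeriv_add (hF a (Finset.mem_cons_self a t))
      (t.analyticAt_fun_sum (fun i hi => hF i (Finset.mem_cons_of_mem hi))) n,
      ih (fun i hi => hF i (Finset.mem_cons_of_mem hi))]

lemma myMul_vanish : ∀ j : ℕ, ∀ {f g : ℝ → ℝ} {k : ℕ}, AnalyticAt ℝ f 0 → AnalyticAt ℝ g 0 →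
    (∀ i < k, iteratedDeriv i g 0 = 0) → j < k →
    iteratedDeriv j (fun s => f s * g s) 0 = 0 := by
  intro j
  induction j with
  | zero =>
    intro f g k hf hg hord hjk
    have := hord 0 hjk
    simp only [iteratedDeriv_zero] at this ⊢
    simp [this]
  | succ j ih =>
    intro f g k hf hg hord hjk
    rw [iteratedDeriv_succ']
    have hev : deriv (fun s => f s * g s) =ᶠ[𝓝 (0 : ℝ)]
        fun s => deriv f s * g s + f s * deriv g s := by
      filter_upwards [hf.eventually_analyticAt, hg.eventually_analyticAt] with s hfs hgs
      exact deriv_mul hfs.differentiableAt hgs.differentiableAt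
    rw [hev.iteratedDeriv_eq j]
    rw [myIteratedDeriv_add ((myAnalyticAt_deriv hf).fun_mul hg) (hf.fun_mul (myAnalyticAt_deriv hg)) j]
    have h1 : iteratedDeriv j (fun s => deriv f s * g s) 0 = 0 :=
      ih (myAnalyticAt_deriv hf) hg hord (by omega)
    have h2 : iteratedDeriv j (fun s => f s * deriv g s) 0 = 0 := by
      refine ih hf (myAnalyticAt_deriv hg) (k := k - 1) (fun i hi => ?_) (by omega)
      rw [← iteratedDeriv_succ']
      exact hord (i + 1) (by omega)
    rw [h1, h2, add_zero]

/-- `ordGE g k` says the order of vanishing at `0` of `g : ℝ → ℝ` is at least `k`,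
i.e. the first `k` Taylor coefficients at `0` vanish. -/
def ordGE (g : ℝ → ℝ) (k : ℕ) : Prop := ∀ i < k, iteratedDeriv i g 0 = 0

/-- If `x` is a real analytic path, `h` is a real analytic germ at `x 0`
with `h (x 0) = 0` and all partial derivatives of `h` vanishing at `x 0`, then
`ord_s h(x(s)) > minᵢ ord_s ∂ᵢh(x(s))`: whenever all the compositions
`s ↦ ∂ᵢh(x(s))` have order `≥ k`, the composition `s ↦ h(x(s))` has order `≥ k + 1`. -/
theorem stmt_2 (n : ℕ) (x : ℝ → (Fin n → ℝ)) (hx : AnalyticAt ℝ x 0)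
    (h : (Fin n → ℝ) → ℝ) (hh : AnalyticAt ℝ h (x 0))
    (h0 : h (x 0) = 0)
    (hd : ∀ i : Fin n, fderiv ℝ h (x 0) (Pi.single i 1) = 0) :
    ∀ k : ℕ,
      (∀ i : Fin n, ordGE (fun s => fderiv ℝ h (x s) (Pi.single i 1)) k) →
      ordGE (fun s => h (x s)) (k + 1) := by
  intro k hk
  have hgx : ∀ i : Fin n, AnalyticAt ℝ (fun s => fderiv ℝ h (x s) (Pi.single i 1)) 0 := by
    intro i
    have h1 : AnalyticAt ℝ (fderiv ℝ h ∘ x) 0 := hh.fderiv.comp hx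
    have h2 := ((ContinuousLinearMap.apply ℝ ℝ ((Pi.single i 1 : Fin n → ℝ))).analyticAt
      ((fderiv ℝ h ∘ x) 0)).comp h1
    simpa [Function.comp_def] using h2
  have hpx : ∀ i : Fin n, AnalyticAt ℝ (fun s => deriv x s i) 0 := by
    intro i
    have := ((ContinuousLinearMap.proj (R := ℝ) (φ := fun _ : Fin n => ℝ) i).analyticAt
      (deriv x 0)).comp (myAnalyticAt_deriv hx)
    simpa [Function.comp_def] using this
  have hev : deriv (fun s => h (x s)) =ᶠ[𝓝 (0:ℝ)]
      fun s => ∑ i, deriv x s i * fderiv ℝ h (x s) (Pi.single i 1) := by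
    filter_upwards [hx.eventually_analyticAt,
      hx.continuousAt.eventually hh.eventually_analyticAt] with s hxs hhs
    have hder : HasDerivAt x (deriv x s) s := hxs.differentiableAt.hasDerivAt
    have hfd : HasFDerivAt h (fderiv ℝ h (x s)) (x s) := hhs.differentiableAt.hasFDerivAt
    have hc : HasDerivAt (fun u => h (x u)) (fderiv ℝ h (x s) (deriv x s)) s :=
      hfd.comp_hasDerivAt s hder
    rw [hc.deriv]
    conv_lhs => rw [← Finset.univ_sum_single (deriv x s)]
    rw [map_sum]
    refine Finset.sum_congr rfl fun i _ => ?_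
    have hsingle : (Pi.single i (deriv x s i) : Fin n → ℝ)
        = deriv x s i • (Pi.single i 1 : Fin n → ℝ) := by
      rw [← Pi.single_smul, smul_eq_mul, mul_one]
    rw [hsingle, map_smul, smul_eq_mul]
  intro m hm
  cases m with
  | zero => simpa using h0
  | succ j =>
    have hjk : j < k := by omega
    rw [iteratedDeriv_succ', hev.iteratedDeriv_eq j,
      myIteratedDeriv_sum Finset.univ (fun i _ => (hpx i).fun_mul (hgx i)) j]
    exact Finset.sum_eq_zero fun i _ => myMul_vanish j (hpx i) (hgx i) (hk i) hjk
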